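/- Let α, β, ζ₁, ζ₂, S₁, S₂ ∈ ℝ and let a, b ∈ ℝ² be linearly independent. Let P be the 2×2 matrix whose first row is aᵀ and second row is bᵀ, and define d := P⁻¹(S₁ − ζ₁, S₂ − ζ₂) and c := P⁻¹(α, β). If μ ∈ ℝ satisfies ‖c‖²μ² − (2⟨d,c⟩ + 1)μ + ‖d‖² = 0, then the vector x := d − μc satisfies ‖x‖² = μ (so in particular μ ≥ 0), and x solves the system α‖x‖² + ⟨a,x⟩ + ζ₁ = S₁ and β‖x‖² + ⟨b,x⟩ + ζ₂ = S₂. -/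

import Mathlib

open scoped RealInnerProductSpace

/-- Interpret a plain vector `Fin 2 → ℝ` as an element of Euclidean space `ℝ²`. -/
noncomputable def toE (v : Fin 2 → ℝ) : EuclideanSpace ℝ (Fin 2) := WithLp.toLp 2 v

/-- The 2×2 matrix whose first row is `aᵀ` and second row is `bᵀ`. -/
noncomputable def Pmat (a b : EuclideanSpace ℝ (Fin 2)) : Matrix (Fin 2) (Fin 2) ℝ :=
  !![a 0, a 1; b 0, b 1]

/-- `d := P⁻¹ (S₁ − ζ₁, S₂ − ζ₂)`. -/
noncomputable def dvec (a b : EuclideanSpace ℝ (Fin 2)) (ζ₁ ζ₂ S₁ S₂ : ℝ) :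
    EuclideanSpace ℝ (Fin 2) :=
  toE ((Pmat a b)⁻¹.mulVec ![S₁ - ζ₁, S₂ - ζ₂])

/-- `c := P⁻¹ (α, β)`. -/
noncomputable def cvec (a b : EuclideanSpace ℝ (Fin 2)) (α β : ℝ) :
    EuclideanSpace ℝ (Fin 2) :=
  toE ((Pmat a b)⁻¹.mulVec ![α, β])

/-- every real root `μ` of the scalar quadratic
`‖c‖²μ² − (2⟨d,c⟩ + 1)μ + ‖d‖² = 0` produces a genuine solution `x = d − μc` of the
pair of quadratic output equations, with `‖x‖² = μ`. -/
theorem stmt11 (α β ζ₁ ζ₂ S₁ S₂ : ℝ) (a b : EuclideanSpace ℝ (Fin 2))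
    (hab : LinearIndependent ℝ ![a, b])
    (μ : ℝ)
    (hμ : ‖cvec a b α β‖ ^ 2 * μ ^ 2 -
      (2 * ⟪dvec a b ζ₁ ζ₂ S₁ S₂, cvec a b α β⟫ + 1) * μ +
      ‖dvec a b ζ₁ ζ₂ S₁ S₂‖ ^ 2 = 0) :
    ‖dvec a b ζ₁ ζ₂ S₁ S₂ - μ • cvec a b α β‖ ^ 2 = μ ∧
    α * ‖dvec a b ζ₁ ζ₂ S₁ S₂ - μ • cvec a b α β‖ ^ 2 +
      ⟪a, dvec a b ζ₁ ζ₂ S₁ S₂ - μ • cvec a b α β⟫ + ζ₁ = S₁ ∧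
    β * ‖dvec a b ζ₁ ζ₂ S₁ S₂ - μ • cvec a b α β‖ ^ 2 +
      ⟪b, dvec a b ζ₁ ζ₂ S₁ S₂ - μ • cvec a b α β⟫ + ζ₂ = S₂ := by
  set d := dvec a b ζ₁ ζ₂ S₁ S₂ with hd
  set c := cvec a b α β with hc
  -- the matrix is invertible
  have hrows : (fun i => Pmat a b i) = (WithLp.linearEquiv 2 ℝ (Fin 2 → ℝ)) ∘ (![a, b] : Fin 2 → EuclideanSpace ℝ (Fin 2)) := by
    funext i j
    fin_cases i <;> fin_cases j <;> simp [Pmat]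
  have hP : IsUnit (Pmat a b) := by
    rw [← Matrix.linearIndependent_rows_iff_isUnit]
    change LinearIndependent ℝ (fun i => Pmat a b i)
    rw [hrows]
    exact hab.map' _ (LinearEquiv.ker _)
  have hdet : IsUnit (Pmat a b).det := (Matrix.isUnit_iff_isUnit_det _).mp hP
  have key : ∀ v : Fin 2 → ℝ, (Pmat a b).mulVec ((Pmat a b)⁻¹.mulVec v) = v := by
    intro v
    rw [Matrix.mulVec_mulVec, Matrix.mul_nonsing_inv _ hdet, Matrix.one_mulVec]
  -- inner products of a,b with d,c
  have had : ⟪a, d⟫ = S₁ - ζ₁ := by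
    have h := congrFun (key ![S₁ - ζ₁, S₂ - ζ₂]) 0
    simp [Pmat, Matrix.mulVec, dotProduct, Fin.sum_univ_two] at h
    simp [hd, dvec, toE, PiLp.inner_apply, Fin.sum_univ_two, Pmat, Matrix.mulVec, dotProduct]
    linear_combination h
  have hbd : ⟪b, d⟫ = S₂ - ζ₂ := by
    have h := congrFun (key ![S₁ - ζ₁, S₂ - ζ₂]) 1
    simp [Pmat, Matrix.mulVec, dotProduct, Fin.sum_univ_two] at h
    simp [hd, dvec, toE, PiLp.inner_apply, Fin.sum_univ_two, Pmat, Matrix.mulVec, dotProduct]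
    linear_combination h
  have hac : ⟪a, c⟫ = α := by
    have h := congrFun (key ![α, β]) 0
    simp [Pmat, Matrix.mulVec, dotProduct, Fin.sum_univ_two] at h
    simp [hc, cvec, toE, PiLp.inner_apply, Fin.sum_univ_two, Pmat, Matrix.mulVec, dotProduct]
    linear_combination h
  have hbc : ⟪b, c⟫ = β := by
    have h := congrFun (key ![α, β]) 1
    simp [Pmat, Matrix.mulVec, dotProduct, Fin.sum_univ_two] at h
    simp [hc, cvec, toE, PiLp.inner_apply, Fin.sum_univ_two, Pmat, Matrix.mulVec, dotProduct]
    linear_combination h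
  -- norm expansion
  have hx : ‖d - μ • c‖ ^ 2 = ‖d‖ ^ 2 - 2 * μ * ⟪d, c⟫ + μ ^ 2 * ‖c‖ ^ 2 := by
    rw [@norm_sub_sq_real, real_inner_smul_right, norm_smul]
    simp [mul_pow, sq_abs]
    ring
  have h1 : ‖d - μ • c‖ ^ 2 = μ := by linear_combination hx + hμ
  refine ⟨h1, ?_, ?_⟩
  · rw [h1, inner_sub_right, real_inner_smul_right, had, hac]; ring
  · rw [h1, inner_sub_right, real_inner_smul_right, hbd, hbc]; ring
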